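/- Let Γ = (V, E, s, r) be a finite directed graph with V nonempty and frame W₁, …, W_k. Then there exists a specialization γ of Γ such that the set of all special paths p = e₁⋯eₙ with s(e₁), …, s(eₙ) ∉ W₁ ∪ ⋯ ∪ W_k is finite. -/

import Mathlib

/-- `w` is a descendant of `v`: there is a (possibly empty) path from `v` to `w`. -/
def Descendant {V E : Type*} (s r : E → V) : V → V → Prop :=
  Relation.ReflTransGen fun a b => ∃ e, s e = a ∧ r e = b

/-- A nonempty subset `W ⊆ V` is hereditary if all descendants of its vertices lie in `W`. -/
def Hereditary {V E : Type*} (s r : E → V) (W : Set V) : Prop :=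
  W.Nonempty ∧ ∀ v ∈ W, ∀ w, Descendant s r v w → w ∈ W

/-- A minimal hereditary subset: hereditary and minimal under inclusion among
hereditary subsets. -/
def MinHereditary {V E : Type*} (s r : E → V) (W : Set V) : Prop :=
  Hereditary s r W ∧ ∀ U : Set V, Hereditary s r U → U ⊆ W → U = W

section Aux

open scoped Classical

variable {V E : Type*} (s r : E → V)

/-- `n`-step reachability. -/
def ReachN : ℕ → V → V → Prop
  | 0, v, w => v = w
  | n+1, v, w => ∃ u, (∃ e, s e = v ∧ r e = u) ∧ ReachN n u w

/-- Union of all minimal hereditary sets. -/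
def FrameSet : Set V := {v | ∃ W, MinHereditary s r W ∧ v ∈ W}

lemma reachN_tail {n : ℕ} {v w x : V} (h : ReachN s r n v w)
    (hst : ∃ e, s e = w ∧ r e = x) : ReachN s r (n+1) v x := by
  induction n generalizing v with
  | zero => exact ⟨x, by cases h; exact hst, rfl⟩
  | succ n ih =>
      obtain ⟨u, hu, hr⟩ := h
      exact ⟨u, hu, ih hr⟩

lemma descendant_reachN {v w : V} (h : Descendant s r v w) : ∃ n, ReachN s r n v w := by
  induction h with
  | refl => exact ⟨0, rfl⟩
  | tail _ hstep ih =>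
      obtain ⟨n, hn⟩ := ih
      exact ⟨n+1, reachN_tail s r hn hstep⟩

lemma exists_frame_descendant [Finite V] (v : V) :
    ∃ w, Descendant s r v w ∧ w ∈ FrameSet s r := by
  set D : Set V := {w | Descendant s r v w} with hD
  have hDher : Hereditary s r D := by
    refine ⟨⟨v, Relation.ReflTransGen.refl⟩, ?_⟩
    intro a ha w hw
    exact Relation.ReflTransGen.trans ha hw
  set S : Set (Set V) := {U | Hereditary s r U ∧ U ⊆ D} with hS
  have hDS : D ∈ S := ⟨hDher, le_refl _⟩
  obtain ⟨U, hUS, hUmin⟩ := (IsWellFounded.wf :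
      WellFounded ((· < ·) : Set V → Set V → Prop)).has_min S ⟨D, hDS⟩
  have hUminher : MinHereditary s r U := by
    refine ⟨hUS.1, ?_⟩
    intro U' hU' hsub
    by_contra hne
    exact hUmin U' ⟨hU', hsub.trans hUS.2⟩ (lt_of_le_of_ne hsub hne)
  obtain ⟨w, hw⟩ := hUS.1.1
  exact ⟨w, hUS.2 hw, U, hUminher, hw⟩

lemma exists_reach_frame [Finite V] (v : V) :
    ∃ n, ∃ w, ReachN s r n v w ∧ w ∈ FrameSet s r := by
  obtain ⟨w, hd, hw⟩ := exists_frame_descendant s r v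
  obtain ⟨n, hn⟩ := descendant_reachN s r hd
  exact ⟨n, w, hn, hw⟩

/-- Distance from `v` to the frame. -/
noncomputable def frameDist [Finite V] (v : V) : ℕ :=
  Nat.find (exists_reach_frame s r v)

lemma exists_edge_dist_lt [Finite V] {v : V} (hv : v ∉ FrameSet s r) :
    ∃ e, s e = v ∧ frameDist s r (r e) < frameDist s r v := by
  obtain ⟨w, hrw, hwF⟩ : ∃ w, ReachN s r (frameDist s r v) v w ∧ w ∈ FrameSet s r :=
    Nat.find_spec (exists_reach_frame s r v)
  have h0 : frameDist s r v ≠ 0 := by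
    intro h
    rw [h] at hrw
    have hvw : v = w := hrw
    subst hvw
    exact hv hwF
  obtain ⟨m, hmn⟩ := Nat.exists_eq_succ_of_ne_zero h0
  rw [hmn] at hrw
  obtain ⟨u, ⟨e, hse, hre⟩, hreach⟩ := hrw
  have hle : frameDist s r (r e) ≤ m := by
    apply Nat.find_le
    rw [hre]
    exact ⟨w, hreach, hwF⟩
  exact ⟨e, hse, by omega⟩

end Aux

/-- Let `(V, E, s, r)` be a finite directed graph with `V` nonempty and frame
`W₁, …, W_k` (the collection of all minimal hereditary subsets). Then there is a
specialization `γ` (a map from non-sink vertices to edges with `s (γ v) = v`) such that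
the set of special paths `p = e₁⋯eₙ` (all edges in the image of `γ`) with
`s e₁, …, s eₙ ∉ W₁ ∪ ⋯ ∪ W_k` is finite. -/
theorem exists_specialization_finite_special_paths_outside_frame
    {V E : Type*} [Fintype V] [Fintype E] [Nonempty V]
    (s r : E → V) :
    ∃ γ : {u : V // ∃ e, s e = u} → E,
      (∀ u, s (γ u) = u.1) ∧
      {p : List E | p ≠ [] ∧ p.Chain' (fun e f => r e = s f) ∧
        (∀ e ∈ p, ∃ u, γ u = e) ∧
        ∀ e ∈ p, ∀ W : Set V, MinHereditary s r W → s e ∉ W}.Finite := by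
  classical
  set d := frameDist s r with hd
  set γ : {u : V // ∃ e, s e = u} → E := fun u =>
    if h : u.1 ∈ FrameSet s r then u.2.choose
    else (exists_edge_dist_lt s r h).choose with hγ
  have hsγ : ∀ u, s (γ u) = u.1 := by
    intro u
    rw [hγ]
    dsimp only
    split
    · exact u.2.choose_spec
    · exact (exists_edge_dist_lt s r (by assumption)).choose_spec.1
  refine ⟨γ, hsγ, ?_⟩
  -- key: every edge in such a path strictly decreases frameDist
  have hdec : ∀ p ∈ {p : List E | p ≠ [] ∧ p.Chain' (fun e f => r e = s f) ∧
        (∀ e ∈ p, ∃ u, γ u = e) ∧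
        ∀ e ∈ p, ∀ W : Set V, MinHereditary s r W → s e ∉ W},
      ∀ e ∈ p, d (r e) < d (s e) := by
    rintro p ⟨-, -, hsp, hout⟩ e he
    obtain ⟨u, hu⟩ := hsp e he
    have hsu : u.1 = s e := by rw [← hu, hsγ]
    have hnotF : u.1 ∉ FrameSet s r := by
      rw [hsu]
      rintro ⟨W, hW, hsW⟩
      exact hout e he W hW hsW
    have heq : γ u = (exists_edge_dist_lt s r hnotF).choose := by
      rw [hγ]; dsimp only; rw [dif_neg hnotF]
    have hspec2 := (exists_edge_dist_lt s r hnotF).choose_spec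
    rw [← heq, hu] at hspec2
    rw [hsu] at hspec2
    exact hspec2.2
  -- length bound along decreasing chains
  have hlen : ∀ (p : List E), p.Chain' (fun e f => r e = s f) →
      (∀ e ∈ p, d (r e) < d (s e)) →
      ∀ e₀, p.head? = some e₀ → p.length ≤ d (s e₀) + 1 := by
    intro p
    induction p with
    | nil => intro _ _ e₀ h; simp at h
    | cons e rest ih =>
        intro hchain hdrop e₀ hhead
        simp only [List.head?_cons, Option.some.injEq] at hhead
        subst hhead
        cases rest with
        | nil => simp
        | cons f t =>
            have hrs : r e = s f := (List.isChain_cons_cons.mp hchain).1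
            have hchain' : (f :: t).Chain' (fun e f => r e = s f) :=
              (List.isChain_cons_cons.mp hchain).2
            have hrest := ih hchain'
              (fun x hx => hdrop x (List.mem_cons_of_mem _ hx)) f rfl
            have h1 : d (r e) < d (s e) := hdrop e List.mem_cons_self
            rw [hrs] at h1
            simp only [List.length_cons] at *
            omega
  -- uniform bound
  set M : ℕ := Finset.univ.sup (fun v : V => d v) + 1 with hM
  apply Set.Finite.subset (List.finite_length_le E M)
  intro p hp
  obtain ⟨hne, hchain, hsp, hout⟩ := hp
  obtain ⟨e₀, t, rfl⟩ := List.exists_cons_of_ne_nil hne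
  have := hlen (e₀ :: t) hchain (hdec _ ⟨hne, hchain, hsp, hout⟩) e₀ rfl
  have hb : d (s e₀) ≤ Finset.univ.sup (fun v : V => d v) :=
    Finset.le_sup (Finset.mem_univ _)
  simp only [Set.mem_setOf_eq]
  omega
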